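/- Let l ≤ u be real numbers with u − l ≤ π. Then every point of P[l,u] is a convex combination of at most two points of D[l,u]: for each (w,v) ∈ P[l,u] there exist r₁, r₂ ≥ 1, θ₁, θ₂ ∈ [l,u] and λ ∈ [0,1] such that (w,v) = λ·(r₁ cos θ₁, r₁ sin θ₁) + (1−λ)·(r₂ cos θ₂, r₂ sin θ₂). -/

import Mathlib

/-- The arc-cone set `D[l,u] = {(r cos θ, r sin θ) : r ≥ 1, l ≤ θ ≤ u}`. -/
def Darc (l u : ℝ) : Set (ℝ × ℝ) :=
  {p | ∃ r θ : ℝ, 1 ≤ r ∧ l ≤ θ ∧ θ ≤ u ∧ p = (r * Real.cos θ, r * Real.sin θ)}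

/-- The polyhedron `P[l,u]` given by the two angular cuts and the chord cut. -/
def Parc (l u : ℝ) : Set (ℝ × ℝ) :=
  {p | Real.sin l * p.1 - Real.cos l * p.2 ≤ 0 ∧
       Real.sin u * p.1 - Real.cos u * p.2 ≥ 0 ∧
       ((Real.cos l + Real.cos u) / 2) * p.1 + ((Real.sin l + Real.sin u) / 2) * p.2 ≥
         ((Real.cos l + Real.cos u) / 2) ^ 2 + ((Real.sin l + Real.sin u) / 2) ^ 2}

lemma rep_half (l x y : ℝ) (hy : 0 ≤ y) (hr : 1 ≤ x ^ 2 + y ^ 2) :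
    ∃ r θ : ℝ, 1 ≤ r ∧ l ≤ θ ∧ θ ≤ l + Real.pi ∧
      r * Real.cos θ = x * Real.cos l - y * Real.sin l ∧
      r * Real.sin θ = x * Real.sin l + y * Real.cos l := by
  have hr0 : (0:ℝ) < x ^ 2 + y ^ 2 := lt_of_lt_of_le one_pos hr
  set r := Real.sqrt (x ^ 2 + y ^ 2) with hrdef
  have hrpos : 0 < r := Real.sqrt_pos.2 hr0
  have hr1 : 1 ≤ r := by
    rw [show (1:ℝ) = Real.sqrt 1 by simp]
    exact Real.sqrt_le_sqrt hr
  have hrsq : r ^ 2 = x ^ 2 + y ^ 2 := Real.sq_sqrt hr0.le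
  have hxr : |x / r| ≤ 1 := by
    rw [abs_div, abs_of_pos hrpos, div_le_one hrpos]
    have : |x| ≤ Real.sqrt (x ^ 2 + y ^ 2) := Real.abs_le_sqrt (by nlinarith [sq_nonneg y])
    exact this
  have hc : Real.cos (Real.arccos (x / r)) = x / r :=
    Real.cos_arccos (neg_le_of_abs_le hxr) (le_of_abs_le hxr)
  have hs : Real.sin (Real.arccos (x / r)) = y / r := by
    rw [Real.sin_arccos]
    have h1 : 1 - (x / r) ^ 2 = (y / r) ^ 2 := by
      field_simp
      nlinarith [hrsq]
    rw [h1, Real.sqrt_sq (div_nonneg hy hrpos.le)]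
  refine ⟨r, l + Real.arccos (x / r), hr1,
    le_add_of_nonneg_right (Real.arccos_nonneg _),
    (add_le_add_iff_left l).2 (Real.arccos_le_pi _), ?_, ?_⟩
  · rw [Real.cos_add, hc, hs]
    field_simp
  · rw [Real.sin_add, hc, hs]
    field_simp

set_option maxHeartbeats 1000000 in
theorem stmt_13 (l u : ℝ) (hlu : l ≤ u) (hπ : u - l ≤ Real.pi) :
    ∀ p ∈ Parc l u, ∃ r₁ r₂ θ₁ θ₂ lam : ℝ,
      1 ≤ r₁ ∧ 1 ≤ r₂ ∧ l ≤ θ₁ ∧ θ₁ ≤ u ∧ l ≤ θ₂ ∧ θ₂ ≤ u ∧ 0 ≤ lam ∧ lam ≤ 1 ∧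
      p = lam • ((r₁ * Real.cos θ₁, r₁ * Real.sin θ₁) : ℝ × ℝ) +
          (1 - lam) • ((r₂ * Real.cos θ₂, r₂ * Real.sin θ₂) : ℝ × ℝ) := by
  intro p hp
  obtain ⟨h1, h2, h3⟩ := hp
  have pyl := Real.sin_sq_add_cos_sq l
  have pyu := Real.sin_sq_add_cos_sq u
  rcases eq_or_lt_of_le hlu with heq | hlt
  · -- case u = l
    subst heq
    have he : Real.sin l * p.1 - Real.cos l * p.2 = 0 := le_antisymm h1 h2
    set r := Real.cos l * p.1 + Real.sin l * p.2 with hrdef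
    have hr1 : 1 ≤ r := by nlinarith [h3]
    refine ⟨r, r, l, l, 1, hr1, hr1, le_refl l, le_refl l, le_refl l, le_refl l,
      zero_le_one, le_refl 1, ?_⟩
    have e1 : p.1 = r * Real.cos l := by
      linear_combination Real.sin l * he - p.1 * pyl
    have e2 : p.2 = r * Real.sin l := by
      linear_combination -Real.cos l * he - p.2 * pyl
    ext <;> simp <;> linarith [e1, e2]
  rcases eq_or_lt_of_le hπ with hpi | hpi
  · -- case u - l = π
    have hu : u = l + Real.pi := by linarith
    subst hu
    rw [Real.sin_add_pi] at h2
    rw [Real.cos_add_pi] at h2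
    set α := Real.cos l * p.1 + Real.sin l * p.2 with hαdef
    set β := Real.cos l * p.2 - Real.sin l * p.1 with hβdef
    have hβ : 0 ≤ β := by simp only [hβdef]; linarith
    set T := |α| + 1 with hTdef
    have hT1 : 1 ≤ α + T := by
      have := neg_abs_le α; simp only [hTdef]; linarith
    have hT2 : α - T ≤ -1 := by
      have := le_abs_self α; simp only [hTdef]; linarith
    obtain ⟨r₁, θ₁, hr₁, hθ₁l, hθ₁u, hc₁, hs₁⟩ :=
      rep_half l (α + T) β hβ (by nlinarith [sq_nonneg β])
    obtain ⟨r₂, θ₂, hr₂, hθ₂l, hθ₂u, hc₂, hs₂⟩ :=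
      rep_half l (α - T) β hβ (by nlinarith [sq_nonneg β])
    refine ⟨r₁, r₂, θ₁, θ₂, 1/2, hr₁, hr₂, hθ₁l, hθ₁u, hθ₂l, hθ₂u,
      by norm_num, by norm_num, ?_⟩
    have e1 : p.1 = (1/2 : ℝ) * (r₁ * Real.cos θ₁) + (1/2 : ℝ) * (r₂ * Real.cos θ₂) := by
      rw [hc₁, hc₂]
      simp only [hαdef, hβdef]
      linear_combination -p.1 * pyl
    have e2 : p.2 = (1/2 : ℝ) * (r₁ * Real.sin θ₁) + (1/2 : ℝ) * (r₂ * Real.sin θ₂) := by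
      rw [hs₁, hs₂]
      simp only [hαdef, hβdef]
      linear_combination -p.2 * pyl
    ext <;> simp <;> [linarith [e1]; linarith [e2]] 
  · -- case 0 < u - l < π
    have hd0 : 0 < u - l := by linarith
    have hsin : 0 < Real.sin (u - l) := Real.sin_pos_of_pos_of_lt_pi hd0 hpi
    have hcossq : Real.cos (u - l) ^ 2 < 1 := by
      nlinarith [Real.sin_sq_add_cos_sq (u - l)]
    have hcos : -1 < Real.cos (u - l) := by nlinarith
    obtain ⟨s, hsdef⟩ : ∃ s : ℝ, s = (Real.sin u * p.1 - Real.cos u * p.2) / Real.sin (u - l) :=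
      ⟨_, rfl⟩
    obtain ⟨t, htdef⟩ : ∃ t : ℝ, t = (Real.cos l * p.2 - Real.sin l * p.1) / Real.sin (u - l) :=
      ⟨_, rfl⟩
    have hs0 : 0 ≤ s := by rw [hsdef]; exact div_nonneg h2 hsin.le
    have ht0 : 0 ≤ t := by rw [htdef]; exact div_nonneg (by linarith) hsin.le
    have key1 : s * Real.cos l + t * Real.cos u = p.1 := by
      rw [hsdef, htdef]
      field_simp
      rw [Real.sin_sub]
      ring
    have key2 : s * Real.sin l + t * Real.sin u = p.2 := by
      rw [hsdef, htdef]
      field_simp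
      rw [Real.sin_sub]
      ring
    have hid : ((Real.cos l + Real.cos u) / 2) * p.1 + ((Real.sin l + Real.sin u) / 2) * p.2
        = (s + t) * ((1 + Real.cos (u - l)) / 2) := by
      rw [← key1, ← key2, Real.cos_sub]
      linear_combination (s / 2) * pyl + (t / 2) * pyu
    have hid2 : ((Real.cos l + Real.cos u) / 2) ^ 2 + ((Real.sin l + Real.sin u) / 2) ^ 2
        = (1 + Real.cos (u - l)) / 2 := by
      rw [Real.cos_sub]
      linear_combination (1/4) * pyl + (1/4) * pyu
    have h3' : (s + t) * ((1 + Real.cos (u - l)) / 2) ≥ (1 + Real.cos (u - l)) / 2 := by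
      rw [← hid, ← hid2]; exact h3
    have hst : 1 ≤ s + t := by
      have he : 0 < (1 + Real.cos (u - l)) / 2 := by linarith
      exact le_of_mul_le_mul_right
        (by linarith [h3'] : 1 * ((1 + Real.cos (u - l)) / 2) ≤ (s + t) * ((1 + Real.cos (u - l)) / 2)) he
    have hstpos : 0 < s + t := by linarith
    refine ⟨s + t, s + t, l, u, s / (s + t), hst, hst, le_refl l, hlu, hlu, le_refl u,
      div_nonneg hs0 hstpos.le, (div_le_one hstpos).2 (by linarith), ?_⟩
    have hl1 : s / (s + t) * (s + t) = s := div_mul_cancel₀ s hstpos.ne'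
    have hl2 : (1 - s / (s + t)) * (s + t) = t := by
      linear_combination -hl1
    have e1 : p.1 = s / (s + t) * ((s + t) * Real.cos l)
        + (1 - s / (s + t)) * ((s + t) * Real.cos u) := by
      linear_combination -key1 - Real.cos l * hl1 - Real.cos u * hl2
    have e2 : p.2 = s / (s + t) * ((s + t) * Real.sin l)
        + (1 - s / (s + t)) * ((s + t) * Real.sin u) := by
      linear_combination -key2 - Real.sin l * hl1 - Real.sin u * hl2
    ext <;> simp <;> [linarith [e1]; linarith [e2]]
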